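/- Let D- be a canonical negative Boolean automaton double-cycle where both cycles have odd sizes n > 1 and m > 1. Then the configuration ((01)^{(n-1)/2}0, (01)^{(m-1)/2}0) is irreversible: once any effective asynchronous update is applied to it, it can never be reached again. -/
import Mathlib


/-- A configuration of a Boolean automaton double-cycle with cycles of sizes `n`
and `m`: the shared automaton `c` is index 0 of both cycles (so valid
configurations satisfy `x.1 0 = x.2 0`). -/
abbrev Cfg (n m : ℕ) := (Fin n → Bool) × (Fin m → Bool)

/-- One asynchronous single-automaton update in a double-cycle whose shared
automaton `c` computes `fc`; every non-shared automaton copies its predecessor. -/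
inductive Step {n m : ℕ} (fc : Cfg n m → Bool) : Cfg n m → Cfg n m → Prop
  | left (x : Cfg n m) (i : Fin n) (hi : 1 ≤ i.val) :
      Step fc x (Function.update x.1 i (x.1 ⟨i.val - 1, by have := i.isLt; omega⟩), x.2)
  | right (x : Cfg n m) (j : Fin m) (hj : 1 ≤ j.val) :
      Step fc x (x.1, Function.update x.2 j (x.2 ⟨j.val - 1, by have := j.isLt; omega⟩))
  | center (x : Cfg n m) (i : Fin n) (j : Fin m) (hi : i.val = 0) (hj : j.val = 0) :
      Step fc x (Function.update x.1 i (fc x), Function.update x.2 j (fc x))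

/-- `Steps fc k x y`: configuration `y` is obtained from `x` by exactly `k`
asynchronous single-automaton updates. -/
def Steps {n m : ℕ} (fc : Cfg n m → Bool) : ℕ → Cfg n m → Cfg n m → Prop
  | 0, x, y => x = y
  | k + 1, x, y => ∃ z, Step fc x z ∧ Steps fc k z y

/-- In a canonical negative double-cycle with both cycle sizes odd and > 1, the
configuration ((01)^{(n-1)/2}0, (01)^{(m-1)/2}0) is irreversible: after any
effective update it can never be reached again. -/
theorem stmt16 (n m : ℕ) (hn : 1 < n) (hm : 1 < m)
    (hnodd : n % 2 = 1) (hmodd : m % 2 = 1) :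
    ∀ x' : Cfg n m,
      Step (fun z : Cfg n m => !(z.1 ⟨n - 1, by omega⟩) && !(z.2 ⟨m - 1, by omega⟩))
        ((fun i => decide (i.val % 2 = 1), fun i => decide (i.val % 2 = 1)) : Cfg n m) x' →
      x' ≠ ((fun i => decide (i.val % 2 = 1), fun i => decide (i.val % 2 = 1)) : Cfg n m) →
      ¬ Relation.ReflTransGen
          (Step (fun z : Cfg n m => !(z.1 ⟨n - 1, by omega⟩) && !(z.2 ⟨m - 1, by omega⟩)))
          x'
          ((fun i => decide (i.val % 2 = 1), fun i => decide (i.val % 2 = 1)) : Cfg n m) := by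
  intro x' _hstep hne hreach
  -- The alternating configuration has no `Step`-predecessor at all.
  have key : ∀ z : Cfg n m,
      ¬ Step (fun z : Cfg n m => !(z.1 ⟨n - 1, by omega⟩) && !(z.2 ⟨m - 1, by omega⟩)) z
        ((fun i => decide (i.val % 2 = 1), fun i => decide (i.val % 2 = 1)) : Cfg n m) := by
    intro z hz
    generalize hsE : ((fun i => decide (i.val % 2 = 1), fun i => decide (i.val % 2 = 1)) : Cfg n m) = s at hz
    cases hz with
    | left i hi =>
      have h1 : (fun (k : Fin n) => decide (k.val % 2 = 1))
          = Function.update z.1 i (z.1 ⟨i.val - 1, by have := i.isLt; omega⟩) :=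
        congrArg Prod.fst hsE
      have hne' : (⟨i.val - 1, by have := i.isLt; omega⟩ : Fin n) ≠ i := by
        intro h; have := Fin.val_eq_val (⟨i.val - 1, by have := i.isLt; omega⟩ : Fin n) i
        simp [h] at this ⊢; omega
      have e1 := congrFun h1 i
      have e2 := congrFun h1 ⟨i.val - 1, by have := i.isLt; omega⟩
      rw [Function.update_self] at e1
      rw [Function.update_of_ne hne'] at e2
      rw [← e2] at e1
      simp only [decide_eq_decide] at e1
      omega
    | right j hj =>
      have h1 : (fun (k : Fin m) => decide (k.val % 2 = 1))
          = Function.update z.2 j (z.2 ⟨j.val - 1, by have := j.isLt; omega⟩) :=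
        congrArg Prod.snd hsE
      have hne' : (⟨j.val - 1, by have := j.isLt; omega⟩ : Fin m) ≠ j := by
        intro h; have := Fin.val_eq_val (⟨j.val - 1, by have := j.isLt; omega⟩ : Fin m) j
        simp [h] at this ⊢; omega
      have e1 := congrFun h1 j
      have e2 := congrFun h1 ⟨j.val - 1, by have := j.isLt; omega⟩
      rw [Function.update_self] at e1
      rw [Function.update_of_ne hne'] at e2
      rw [← e2] at e1
      simp only [decide_eq_decide] at e1
      omega
    | center i j hi hj =>
      have hpair : ((fun k : Fin n => decide (k.val % 2 = 1), fun k : Fin m => decide (k.val % 2 = 1)) : Cfg n m)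
          = (Function.update z.1 i (!(z.1 ⟨n - 1, by omega⟩) && !(z.2 ⟨m - 1, by omega⟩)),
             Function.update z.2 j (!(z.1 ⟨n - 1, by omega⟩) && !(z.2 ⟨m - 1, by omega⟩))) :=
        hsE
      have h1 := congrArg Prod.fst hpair
      have h2 := congrArg Prod.snd hpair
      simp only at h1 h2
      -- n-1 ≠ i (since i.val = 0 and n > 1), similarly m-1 ≠ j
      have hni : (⟨n - 1, by omega⟩ : Fin n) ≠ i := by
        intro h; have : n - 1 = i.val := congrArg Fin.val h; omega
      have hmj : (⟨m - 1, by omega⟩ : Fin m) ≠ j := by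
        intro h; have : m - 1 = j.val := congrArg Fin.val h; omega
      have e1 := congrFun h1 ⟨n - 1, by omega⟩
      have e2 := congrFun h2 ⟨m - 1, by omega⟩
      rw [Function.update_of_ne hni] at e1
      rw [Function.update_of_ne hmj] at e2
      have hn1 : (n - 1) % 2 = 0 := by omega
      have hm1 : (m - 1) % 2 = 0 := by omega
      simp only [hn1, hm1] at e1 e2
      -- so x.1 ⟨n-1⟩ = false, x.2 ⟨m-1⟩ = false, hence fc x = true
      have e0 := congrFun h1 i
      rw [Function.update_self] at e0
      rw [← e1, ← e2] at e0
      simp [hi] at e0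
  rcases Relation.ReflTransGen.cases_tail hreach with h | ⟨c, _, hc⟩
  · exact hne h.symm
  · exact key c hc
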